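/- Let n > 0 and let Φ_rv(t) be the position–velocity block of the Clohessy–Wiltshire state-transition matrix. Then for every t with 0 < nt < π, one has 8(1 − cos(nt)) − 3nt·sin(nt) > 0, hence det Φ_rv(t) = (sin(nt)/n³)·(8(1 − cos(nt)) − 3nt·sin(nt)) > 0 and Φ_rv(t) is invertible. -/

import Mathlib

open Real Matrix

/-- Position-velocity block of the Clohessy–Wiltshire state-transition matrix. -/
noncomputable def phiRV (n t : ℝ) : Matrix (Fin 3) (Fin 3) ℝ :=
  (1 / n) • !![Real.sin (n * t), 2 * (1 - Real.cos (n * t)), 0;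
               -2 * (1 - Real.cos (n * t)), 4 * Real.sin (n * t) - 3 * (n * t), 0;
               0, 0, Real.sin (n * t)]

theorem phiRV_invertible_of_lt_pi (n : ℝ) (hn : 0 < n) (t : ℝ)
    (h0 : 0 < n * t) (hπ : n * t < Real.pi) :
    0 < 8 * (1 - Real.cos (n * t)) - 3 * (n * t) * Real.sin (n * t) ∧
      (phiRV n t).det =
        (Real.sin (n * t) / n ^ 3) *
          (8 * (1 - Real.cos (n * t)) - 3 * (n * t) * Real.sin (n * t)) ∧
      0 < (phiRV n t).det ∧ IsUnit (phiRV n t) := by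
  set x := n * t with hx
  -- key inequality
  have hu0 : 0 < x / 2 := by linarith
  have huπ : x / 2 < Real.pi / 2 := by linarith
  have hs : 0 < Real.sin (x / 2) := Real.sin_pos_of_pos_of_lt_pi hu0 (by linarith [Real.pi_pos])
  have hc : 0 < Real.cos (x / 2) := Real.cos_pos_of_mem_Ioo ⟨by linarith [Real.pi_pos], huπ⟩
  have htan : x / 2 < Real.tan (x / 2) := Real.lt_tan hu0 huπ
  have htan' : (x / 2) * Real.cos (x / 2) < Real.sin (x / 2) := by
    have h := (lt_div_iff₀ hc).mp (by rw [Real.tan_eq_sin_div_cos] at htan; exact htan)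
    linarith
  have hpyu : Real.sin (x / 2) ^ 2 + Real.cos (x / 2) ^ 2 = 1 := Real.sin_sq_add_cos_sq _
  have hcosx : Real.cos x = 1 - 2 * Real.sin (x / 2) ^ 2 := by
    have h := Real.cos_two_mul (x / 2)
    rw [show (2 : ℝ) * (x / 2) = x by ring] at h
    nlinarith [hpyu]
  have hsinx : Real.sin x = 2 * Real.sin (x / 2) * Real.cos (x / 2) := by
    have h := Real.sin_two_mul (x / 2)
    rwa [show (2 : ℝ) * (x / 2) = x by ring] at h
  have hkey : 0 < 8 * (1 - Real.cos x) - 3 * x * Real.sin x := by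
    rw [hcosx, hsinx]
    nlinarith [mul_pos hs hc, mul_lt_mul_of_pos_left htan' hs]
  have hsx : 0 < Real.sin x := Real.sin_pos_of_pos_of_lt_pi h0 hπ
  have hn3 : 0 < n ^ 3 := by positivity
  have hdet : (phiRV n t).det =
      (Real.sin x / n ^ 3) * (8 * (1 - Real.cos x) - 3 * x * Real.sin x) := by
    have hpy : Real.sin x ^ 2 + Real.cos x ^ 2 = 1 := Real.sin_sq_add_cos_sq x
    simp only [phiRV, ← hx, Matrix.det_fin_three, Matrix.smul_apply, Matrix.cons_val',
      Matrix.cons_val_zero, Matrix.cons_val_one, Matrix.head_cons, Matrix.empty_val',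
      Matrix.cons_val_fin_one, Matrix.head_fin_const, smul_eq_mul, Matrix.of_apply,
      Matrix.cons_val_two, Matrix.tail_cons]
    field_simp
    linear_combination (4 * Real.sin x) * hpy
  have hdetpos : 0 < (phiRV n t).det := by
    rw [hdet]
    exact mul_pos (div_pos hsx hn3) hkey
  refine ⟨hkey, hdet, hdetpos, ?_⟩
  rw [Matrix.isUnit_iff_isUnit_det]
  exact isUnit_iff_ne_zero.mpr (ne_of_gt hdetpos)
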